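/- For any real numbers a, b and any real constants β, c, the function f(z) = -βz + (az+b)²/(1-z²) + c is convex on (-1,1); in particular the tippe top effective potential V(z,D,λ) = mgR(1-αz) + (λ(α-(1-γ)z) + RD√(γ+α²-1)(α-z))²/(2I₃R²γ²(γ+α²-1)(1-z²)) + const is convex in z on (-1,1) for all real D, λ, provided m, g, R, I₃ > 0, 0 < α < 1, and 1-α² < γ < 1. -/

import Mathlib

open Set

private lemma inv_convex_Ioi : ConvexOn ℝ (Ioi (0:ℝ)) (fun x : ℝ => x⁻¹) := by
  have h := (strictConvexOn_zpow (m := -1) (by norm_num) (by norm_num)).convexOn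
  refine h.congr ?_
  intro x _
  simp [zpow_neg_one]

private lemma conv_one_sub : ConvexOn ℝ (Ioo (-1:ℝ) 1) (fun z : ℝ => (1 - z)⁻¹) := by
  have haff := inv_convex_Ioi.comp_affineMap (AffineMap.const ℝ ℝ (1:ℝ) - AffineMap.id ℝ ℝ)
  have hsub : Ioo (-1:ℝ) 1 ⊆ ⇑(AffineMap.const ℝ ℝ (1:ℝ) - AffineMap.id ℝ ℝ) ⁻¹' Ioi 0 := by
    intro z hz
    obtain ⟨h1, h2⟩ := hz
    simp only [Set.mem_preimage, AffineMap.coe_sub, AffineMap.coe_const, AffineMap.coe_id,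
      Pi.sub_apply, Function.const_apply, id_eq, Set.mem_Ioi]
    linarith
  have h2 : ConvexOn ℝ (Ioo (-1:ℝ) 1)
      ((fun x : ℝ => x⁻¹) ∘ ⇑(AffineMap.const ℝ ℝ (1:ℝ) - AffineMap.id ℝ ℝ)) :=
    haff.subset hsub (convex_Ioo _ _)
  exact h2.congr (fun z _ => by
    simp [Function.comp, AffineMap.coe_sub])

private lemma conv_one_add : ConvexOn ℝ (Ioo (-1:ℝ) 1) (fun z : ℝ => (1 + z)⁻¹) := by
  have haff := inv_convex_Ioi.comp_affineMap (AffineMap.const ℝ ℝ (1:ℝ) + AffineMap.id ℝ ℝ)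
  have hsub : Ioo (-1:ℝ) 1 ⊆ ⇑(AffineMap.const ℝ ℝ (1:ℝ) + AffineMap.id ℝ ℝ) ⁻¹' Ioi 0 := by
    intro z hz
    obtain ⟨h1, h2⟩ := hz
    simp only [Set.mem_preimage, AffineMap.coe_add, AffineMap.coe_const, AffineMap.coe_id,
      Pi.add_apply, Function.const_apply, id_eq, Set.mem_Ioi]
    linarith
  have h2 : ConvexOn ℝ (Ioo (-1:ℝ) 1)
      ((fun x : ℝ => x⁻¹) ∘ ⇑(AffineMap.const ℝ ℝ (1:ℝ) + AffineMap.id ℝ ℝ)) :=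
    haff.subset hsub (convex_Ioo _ _)
  exact h2.congr (fun z _ => by
    simp [Function.comp])

private lemma conv_affine (β c : ℝ) : ConvexOn ℝ (Ioo (-1:ℝ) 1) (fun z : ℝ => -β*z + c) :=
  ⟨convex_Ioo _ _, fun x _ y _ p q hp hq hpq => le_of_eq (by
    simp only [smul_eq_mul]; linear_combination (-c) * hpq)⟩

private lemma key (a b : ℝ) :
    ConvexOn ℝ (Ioo (-1:ℝ) 1) (fun z : ℝ => (a*z+b)^2 / (1 - z^2)) := by
  have h : ConvexOn ℝ (Ioo (-1:ℝ) 1)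
      (fun z : ℝ => ((a+b)^2/2) * (1 - z)⁻¹ + (((a-b)^2/2) * (1 + z)⁻¹ + (-a^2))) := by
    refine ((conv_one_sub.smul (by positivity)).add
      ((conv_one_add.smul (by positivity)).add (convexOn_const _ (convex_Ioo _ _))))
  refine h.congr fun z hz => ?_
  obtain ⟨h1, h2⟩ := hz
  have hne1 : (1:ℝ) - z ≠ 0 := by linarith
  have hne2 : (1:ℝ) + z ≠ 0 := by linarith
  have hne : (1:ℝ) - z^2 ≠ 0 := by
    have : (1:ℝ) - z^2 = (1-z)*(1+z) := by ring
    rw [this]; exact mul_ne_zero hne1 hne2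
  field_simp
  ring

private lemma main (a b β c : ℝ) :
    ConvexOn ℝ (Ioo (-1:ℝ) 1) (fun z : ℝ => -β*z + (a*z+b)^2 / (1 - z^2) + c) := by
  exact ((conv_affine β c).add (key a b)).congr (fun z _ => by
    show -β*z + c + (a*z+b)^2 / (1 - z^2) = _
    ring)

theorem stmt_2 (a b β c : ℝ)
    (m grav R I₃ α γ : ℝ) (hm : 0 < m) (hg : 0 < grav) (hR : 0 < R) (hI₃ : 0 < I₃)
    (hα : 0 < α) (hα1 : α < 1) (hγl : 1 - α^2 < γ) (hγu : γ < 1)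
    (D lam c' : ℝ) :
    ConvexOn ℝ (Set.Ioo (-1 : ℝ) 1) (fun z => -β*z + (a*z+b)^2 / (1 - z^2) + c) ∧
    ConvexOn ℝ (Set.Ioo (-1 : ℝ) 1) (fun z =>
      m*grav*R*(1 - α*z)
        + (lam*(α - (1-γ)*z) + R*D*Real.sqrt (γ + α^2 - 1)*(α - z))^2
            / (2*I₃*R^2*γ^2*(γ + α^2 - 1)*(1 - z^2))
        + c') := by
  constructor
  · exact main a b β c
  · set k : ℝ := γ + α^2 - 1 with hk
    have hkpos : 0 < k := by simp only [hk]; linarith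
    set K : ℝ := 2*I₃*R^2*γ^2*k with hK
    have hγpos : 0 < γ := by nlinarith
    have hKpos : 0 < K := by positivity
    set s : ℝ := Real.sqrt K with hs
    have hspos : 0 < s := Real.sqrt_pos.mpr hKpos
    have hs2 : s^2 = K := Real.sq_sqrt hKpos.le
    set A : ℝ := (-(lam*(1-γ) + R*D*Real.sqrt k)) / s with hA
    set B : ℝ := (lam*α + R*D*Real.sqrt k * α) / s with hB
    have := main A B (m*grav*R*α) (m*grav*R + c')
    refine this.congr fun z _ => ?_
    simp only [hA, hB]
    have hsne : s ≠ 0 := hspos.ne'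
    have hnum : (A*z+B)^2 = (lam*(α - (1-γ)*z) + R*D*Real.sqrt k*(α - z))^2 / K := by
      simp only [hA, hB]
      rw [div_mul_eq_mul_div, ← add_div, div_pow, hs2]
      congr 1; ring
    calc -(m*grav*R*α)*z + (A*z+B)^2 / (1 - z^2) + (m*grav*R + c')
        = -(m*grav*R*α)*z + ((lam*(α - (1-γ)*z) + R*D*Real.sqrt k*(α - z))^2 / K) / (1 - z^2)
          + (m*grav*R + c') := by rw [hnum]
      _ = m*grav*R*(1 - α*z)
          + (lam*(α - (1-γ)*z) + R*D*Real.sqrt k*(α - z))^2 / (K*(1 - z^2)) + c' := by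
          rw [div_div]; ring
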